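/- Let μ be a probability measure on ℝ with mean 0 and finite moments of all orders, let p ≥ 2 be even, and let X₁,...,X_n be independent with Xᵢ = uᵢwᵢ where wᵢ ~ μ iid and u ∈ ℝ^n is a unit vector. Then for every t > 0, Σᵢ log E[|1 + Xᵢ/t|^p] ≤ E[(1+|w₁|)^p] · ((1 + 1/t)^p − 1 − p/t). -/
import Mathlib

open MeasureTheory Finset

-- tangent line bound for even powers
lemma tangent_even' (p : ℕ) (hp : 2 ≤ p) (hpeven : Even p) (a : ℝ) :
    1 + p * a ≤ (1 + a) ^ p := by
  rcases le_or_gt (-2) a with h | h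
  · exact one_add_mul_le_pow h p
  · have h1 : (1:ℝ) + a ≠ 0 := by linarith
    have h2 : (0:ℝ) < (1+a)^p := hpeven.pow_pos h1
    have hp' : (2:ℝ) ≤ p := by exact_mod_cast hp
    nlinarith

lemma int_xk' (μ : Measure ℝ) (hmom : ∀ k : ℕ, Integrable (fun x => |x| ^ k) μ) (k : ℕ) :
    Integrable (fun x : ℝ => x ^ k) μ := by
  refine (hmom k).mono (measurable_id.pow_const k).aestronglyMeasurable ?_
  filter_upwards with x
  simp [abs_pow]

lemma key' (μ : Measure ℝ) [IsProbabilityMeasure μ]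
    (hmean : ∫ x, x ∂μ = 0)
    (hmom : ∀ k : ℕ, Integrable (fun x => |x| ^ k) μ)
    (p : ℕ) (hp : 2 ≤ p) (hpeven : Even p)
    (v : ℝ) (hv : |v| ≤ 1) (t : ℝ) (ht : 0 < t) :
    Real.log (∫ x, |1 + v * x / t| ^ p ∂μ) ≤
      v ^ 2 * ((∫ x, (1 + |x|) ^ p ∂μ) * ((1 + 1 / t) ^ p - 1 - p / t)) := by
  set c : ℝ := v / t with hc
  set M : ℝ := ∫ x, (1 + |x|) ^ p ∂μ with hM
  have habs : ∀ x : ℝ, |1 + v * x / t| ^ p = (1 + c * x) ^ p := by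
    intro x
    rw [hpeven.pow_abs]
    congr 1
    rw [hc]
    field_simp
  -- binomial expansion as function
  have hexp : ∀ x : ℝ, (1 + c * x) ^ p
      = ∑ k ∈ range (p+1), ((p.choose k : ℝ) * c ^ k) * x ^ k := by
    intro x
    rw [add_comm, add_pow]
    refine sum_congr rfl fun k _ => by ring
  have hint : ∀ c' : ℝ, Integrable (fun x => (1 + c' * x) ^ p) μ := by
    intro c'
    have : (fun x : ℝ => (1 + c' * x) ^ p)
        = fun x => ∑ k ∈ range (p+1), ((p.choose k : ℝ) * c' ^ k) * x ^ k := by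
      funext x
      rw [add_comm, add_pow]
      exact sum_congr rfl fun k _ => by ring
    rw [this]
    exact integrable_finset_sum _ fun k _ => (int_xk' μ hmom k).const_mul _
  set m : ℕ → ℝ := fun k => ∫ x, x ^ k ∂μ with hm
  have hintM : Integrable (fun x : ℝ => (1 + |x|) ^ p) μ := by
    have : (fun x : ℝ => (1 + |x|) ^ p)
        = fun x => ∑ k ∈ range (p+1), (p.choose k : ℝ) * |x| ^ k := by
      funext x
      rw [add_comm, add_pow]
      exact sum_congr rfl fun k _ => by ring
    rw [this]
    exact integrable_finset_sum _ fun k _ => (hmom k).const_mul _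
  have hM1 : 1 ≤ M := by
    rw [hM]
    calc (1:ℝ) = ∫ _x, (1:ℝ) ∂μ := by simp
    _ ≤ ∫ x, (1 + |x|) ^ p ∂μ := by
        refine integral_mono (integrable_const 1) hintM fun x => ?_
        calc (1:ℝ) = 1 ^ p := (one_pow p).symm
        _ ≤ (1 + |x|) ^ p := pow_le_pow_left₀ zero_le_one (by linarith [abs_nonneg x]) p
  -- value of the integral
  set y : ℝ := ∫ x, |1 + v * x / t| ^ p ∂μ with hy
  have hyval : y = ∑ k ∈ range (p+1), ((p.choose k : ℝ) * c ^ k) * m k := by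
    rw [hy]
    simp only [habs, hexp]
    rw [integral_finset_sum _ fun k _ => (int_xk' μ hmom k).const_mul _]
    exact sum_congr rfl fun k _ => integral_const_mul _ _
  -- y ≥ 1
  have hintx : Integrable (fun x : ℝ => x) μ := by
    simpa using int_xk' μ hmom 1
  have hy1 : 1 ≤ y := by
    rw [hy]
    calc (1:ℝ) = ∫ x, (1 + (p:ℝ) * (c * x)) ∂μ := by
          have h1 : (fun x : ℝ => 1 + (p:ℝ) * (c * x)) = fun x => 1 + ((p:ℝ)*c) * x := by
            funext x; ring
          rw [h1, integral_add (integrable_const 1) (hintx.const_mul _), integral_const_mul]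
          simp [hmean]
    _ ≤ ∫ x, |1 + v * x / t| ^ p ∂μ := by
        refine integral_mono ?_ ?_ fun x => ?_
        · exact (integrable_const 1).add ((hintx.const_mul ((p:ℝ)*c)).congr
            (by filter_upwards with x; ring))
        · refine (hint c).congr ?_
          filter_upwards with x
          rw [habs]
        · rw [habs]
          exact tangent_even' p hp hpeven (c * x)
  have hy0 : 0 < y := lt_of_lt_of_le one_pos hy1
  -- split the sum
  have hsplit : ∀ f : ℕ → ℝ, ∑ k ∈ range (p+1), f k = f 0 + (f 1 + ∑ k ∈ Ico 2 (p+1), f k) := by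
    intro f
    rw [range_eq_Ico, sum_eq_sum_Ico_succ_bot (by omega), sum_eq_sum_Ico_succ_bot (by omega)]
  -- bound on the tail
  have hmk : ∀ k, 2 ≤ k → k ≤ p → |m k| ≤ M := by
    intro k _ hkp
    have h1 : |m k| ≤ ∫ x, |x| ^ k ∂μ := by
      have := norm_integral_le_integral_norm (μ := μ) (f := fun x : ℝ => x ^ k)
      simpa [Real.norm_eq_abs, abs_pow] using this
    refine h1.trans (integral_mono (hmom k) hintM fun x => ?_)
    calc |x| ^ k ≤ (1 + |x|) ^ k :=
          pow_le_pow_left₀ (abs_nonneg x) (by linarith [abs_nonneg x]) k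
    _ ≤ (1 + |x|) ^ p := pow_le_pow_right₀ (by linarith [abs_nonneg x]) hkp
  have htail : ∑ k ∈ Ico 2 (p+1), ((p.choose k : ℝ) * c ^ k) * m k
      ≤ v ^ 2 * M * ∑ k ∈ Ico 2 (p+1), (p.choose k : ℝ) * (1/t) ^ k := by
    rw [mul_sum]
    refine sum_le_sum fun k hk => ?_
    obtain ⟨hk2, hkp⟩ := mem_Ico.mp hk
    have hkp' : k ≤ p := by omega
    have h1 : |c| ^ k ≤ v ^ 2 * (1/t) ^ k := by
      have : |c| = |v| * (1/t) := by
        rw [hc, abs_div, abs_of_pos ht]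
        ring
      rw [this, mul_pow]
      have hv2 : |v| ^ k ≤ v ^ 2 := by
        calc |v| ^ k ≤ |v| ^ 2 := pow_le_pow_of_le_one (abs_nonneg v) hv hk2
        _ = v ^ 2 := sq_abs v
      exact mul_le_mul_of_nonneg_right hv2 (by positivity)
    calc ((p.choose k : ℝ) * c ^ k) * m k ≤ |((p.choose k : ℝ) * c ^ k) * m k| := le_abs_self _
    _ = (p.choose k : ℝ) * |c| ^ k * |m k| := by
        rw [abs_mul, abs_mul, abs_pow, Nat.abs_cast]
    _ ≤ (p.choose k : ℝ) * (v ^ 2 * (1/t) ^ k) * M := by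
        refine mul_le_mul (mul_le_mul_of_nonneg_left h1 (by positivity))
          (hmk k hk2 hkp') (abs_nonneg _) (by positivity)
    _ = v ^ 2 * M * ((p.choose k : ℝ) * (1/t) ^ k) := by ring
  -- the S identity
  have hS : (1 + 1/t) ^ p - 1 - (p:ℝ)/t = ∑ k ∈ Ico 2 (p+1), (p.choose k : ℝ) * (1/t) ^ k := by
    have : (1 + 1/t : ℝ) ^ p = ∑ k ∈ range (p+1), (p.choose k : ℝ) * (1/t) ^ k := by
      rw [add_comm, add_pow]
      exact sum_congr rfl fun k _ => by ring
    rw [this, hsplit fun k => (p.choose k : ℝ) * (1/t) ^ k]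
    simp [Nat.choose_one_right]
    ring
  -- finish
  calc Real.log y ≤ y - 1 := Real.log_le_sub_one_of_pos hy0
  _ = ((p.choose 1 : ℝ) * c ^ 1) * m 1 + ∑ k ∈ Ico 2 (p+1), ((p.choose k : ℝ) * c ^ k) * m k := by
      rw [hyval, hsplit fun k => ((p.choose k : ℝ) * c ^ k) * m k]
      have h0 : m 0 = 1 := by simp [hm]
      simp [h0]
  _ = ∑ k ∈ Ico 2 (p+1), ((p.choose k : ℝ) * c ^ k) * m k := by
      have h1 : m 1 = 0 := by simpa [hm] using hmean
      simp [h1]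
  _ ≤ v ^ 2 * M * ∑ k ∈ Ico 2 (p+1), (p.choose k : ℝ) * (1/t) ^ k := htail
  _ = v ^ 2 * (M * ((1 + 1/t) ^ p - 1 - (p:ℝ)/t)) := by rw [hS]; ring

theorem stmt_14 (μ : Measure ℝ) [IsProbabilityMeasure μ]
    (hmean : ∫ x, x ∂μ = 0)
    (hmom : ∀ k : ℕ, Integrable (fun x => |x| ^ k) μ)
    (p : ℕ) (hp : 2 ≤ p) (hpeven : Even p)
    (n : ℕ) (u : Fin n → ℝ) (hu : ∑ i, u i ^ 2 = 1)
    (t : ℝ) (ht : 0 < t) :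
    ∑ i, Real.log (∫ x, |1 + u i * x / t| ^ p ∂μ) ≤
      (∫ x, (1 + |x|) ^ p ∂μ) * ((1 + 1 / t) ^ p - 1 - p / t) := by
  have hv : ∀ i, |u i| ≤ 1 := by
    intro i
    have h1 : u i ^ 2 ≤ 1 := by
      rw [← hu]
      exact Finset.single_le_sum (fun j _ => sq_nonneg (u j)) (mem_univ i)
    exact abs_le.mpr ⟨by nlinarith, by nlinarith⟩
  calc ∑ i, Real.log (∫ x, |1 + u i * x / t| ^ p ∂μ)
      ≤ ∑ i, u i ^ 2 * ((∫ x, (1 + |x|) ^ p ∂μ) * ((1 + 1 / t) ^ p - 1 - p / t)) :=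
        Finset.sum_le_sum fun i _ => key' μ hmean hmom p hp hpeven (u i) (hv i) t ht
  _ = (∫ x, (1 + |x|) ^ p ∂μ) * ((1 + 1 / t) ^ p - 1 - p / t) := by
      rw [← Finset.sum_mul, hu, one_mul]
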